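/- Let A ∈ B(E,F) have generalized inverse A⁺ and let T ∈ B(E,F) with ‖T − A‖ < ‖A⁺‖⁻¹. Then R(T) ∩ N(A⁺) = {0} if and only if C_A(A⁺,T)⁻¹ T maps N(A) into R(A), where C_A(A⁺,T) = I_F + (T−A)A⁺. -/

import Mathlib

theorem stmt_6 {E F : Type*} [NormedAddCommGroup E] [NormedSpace ℝ E] [CompleteSpace E]
    [NormedAddCommGroup F] [NormedSpace ℝ F] [CompleteSpace F]
    (A T : E →L[ℝ] F) (Ap : F →L[ℝ] E)
    (h1 : A ∘L Ap ∘L A = A) (h2 : Ap ∘L A ∘L Ap = Ap)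
    (hT : ‖T - A‖ < ‖Ap‖⁻¹) :
    LinearMap.range (T : E →ₗ[ℝ] F) ⊓ LinearMap.ker (Ap : F →ₗ[ℝ] E) = ⊥ ↔
      ∀ e ∈ LinearMap.ker (A : E →ₗ[ℝ] F),
        (Ring.inverse ((1 : F →L[ℝ] F) + (T - A) ∘L Ap) ∘L T) e ∈ LinearMap.range (A : E →ₗ[ℝ] F) := by
  have hA : ∀ x, A (Ap (A x)) = A x := fun x => by
    have := ContinuousLinearMap.ext_iff.mp h1 x
    simpa using this
  have hAp : ∀ y, Ap (A (Ap y)) = Ap y := fun y => by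
    have := ContinuousLinearMap.ext_iff.mp h2 y
    simpa using this
  set C : F →L[ℝ] F := (1 : F →L[ℝ] F) + (T - A) ∘L Ap with hCdef
  have hCapp : ∀ y, C y = y + (T (Ap y) - A (Ap y)) := fun y => by
    simp [hCdef]
  have hnorm : ‖(T - A) ∘L Ap‖ < 1 := by
    rcases eq_or_ne Ap 0 with h | h
    · simp [h]
    · have hpos : 0 < ‖Ap‖ := norm_pos_iff.mpr h
      calc ‖(T - A) ∘L Ap‖ ≤ ‖T - A‖ * ‖Ap‖ := ContinuousLinearMap.opNorm_comp_le _ _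
        _ < ‖Ap‖⁻¹ * ‖Ap‖ := mul_lt_mul_of_pos_right hT hpos
        _ = 1 := inv_mul_cancel₀ (ne_of_gt hpos)
  have hunit : IsUnit C := by
    have hu : IsUnit ((1 : F →L[ℝ] F) - -((T - A) ∘L Ap)) :=
      (Units.oneSub _ (by rwa [norm_neg])).isUnit
    rwa [sub_neg_eq_add] at hu
  set Ci : F →L[ℝ] F := Ring.inverse C with hCidef
  have hCiC : ∀ y, Ci (C y) = y := fun y => by
    have hm : Ci * C = 1 := Ring.inverse_mul_cancel C hunit
    calc Ci (C y) = (Ci * C) y := rfl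
      _ = y := by rw [hm]; rfl
  have hCCi : ∀ y, C (Ci y) = y := fun y => by
    have hm : C * Ci = 1 := Ring.mul_inverse_cancel C hunit
    calc C (Ci y) = (C * Ci) y := rfl
      _ = y := by rw [hm]; rfl
  have hfix : ∀ y, Ap y = 0 → C y = y := fun y hy => by
    rw [hCapp, hy]; simp
  have hCA : ∀ x, C (A x) = T (Ap (A x)) := fun x => by
    rw [hCapp, hA]; abel
  constructor
  · intro h e _he
    simp only [ContinuousLinearMap.comp_apply, ← hCidef]
    set w := Ci (T e) with hw
    have hCw : C w = T e := hCCi (T e)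
    set f := w - A (Ap w) with hf
    have hApf : Ap f = 0 := by simp [hf, map_sub, hAp]
    have hCf : C f = f := hfix f hApf
    have hfT : f = T (e - Ap w) := by
      have h1' : C f = T e - T (Ap w) := by
        rw [hf, map_sub, hCw, hCA (Ap w), hAp]
      rw [← hCf, h1', map_sub]
    have hmem : f ∈ LinearMap.range (T : E →ₗ[ℝ] F) ⊓ LinearMap.ker (Ap : F →ₗ[ℝ] E) := by
      refine Submodule.mem_inf.mpr ⟨⟨e - Ap w, hfT.symm⟩, ?_⟩
      exact LinearMap.mem_ker.mpr hApf
    have hf0 : f = 0 := by rw [h] at hmem; simpa using hmem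
    have : w = A (Ap w) := by
      have := sub_eq_zero.mp (hf ▸ hf0)
      exact this
    exact ⟨Ap w, this.symm⟩
  · intro h
    rw [eq_bot_iff]
    intro f hf
    rw [Submodule.mem_inf] at hf
    obtain ⟨⟨u, hu⟩, hker⟩ := hf
    have hker' : Ap f = 0 := LinearMap.mem_ker.mp hker
    have hCif : Ci f = f := by
      conv_lhs => rw [← hfix f hker']
      exact hCiC f
    set e := u - Ap (A u) with he
    have heker : e ∈ LinearMap.ker (A : E →ₗ[ℝ] F) := by
      simp [he, map_sub, hA]
    obtain ⟨x, hx⟩ := h e heker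
    have hxe : Ci (T e) = A x := by
      simpa [ContinuousLinearMap.comp_apply, ← hCidef] using hx.symm
    have hTu : Ci (T u) = A u + A x := by
      have hsplit : T u = T (Ap (A u)) + T e := by
        rw [he, map_sub]; abel
      rw [hsplit, map_add, hxe]
      congr 1
      rw [← hCA u]
      exact hCiC (A u)
    have hfA : f = A (u + x) := by
      rw [← hCif, ← hu, ContinuousLinearMap.coe_coe, hTu, map_add]
    have hf0 : f = 0 := by
      have h2' := hA (u + x)
      rw [← hfA, hker'] at h2'
      rw [← h2', map_zero]
    simpa using hf0
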